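/- If f is a Hecke-multiplicative function and d is a squarefree positive integer, then for any positive integer m, |f(md²)| ≤ Σ_{abc = d} |f(a²)|·|f(m/c²)|, where f(m/c²) = 0 if c² ∤ m. -/

import Mathlib

open Finset

def HeckeMult (f : ℕ → ℂ) : Prop :=
  f 1 = 1 ∧ ∀ m n : ℕ, 0 < m → 0 < n →
    f m * f n = ∑ d ∈ (Nat.gcd m n).divisors, f (m * n / d ^ 2)

lemma hecke_coprime (f : ℕ → ℂ) (hf : HeckeMult f) {a b : ℕ} (ha : 0 < a) (hb : 0 < b)
    (hab : Nat.Coprime a b) : f a * f b = f (a * b) := by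
  rw [hf.2 a b ha hb, hab]
  simp

/-- auxiliary weight function -/
noncomputable def W (f : ℕ → ℂ) (m c : ℕ) : ℝ :=
  ‖if c ^ 2 ∣ m then f (m / c ^ 2) else 0‖

lemma W_nonneg (f : ℕ → ℂ) (m c : ℕ) : 0 ≤ W f m c := norm_nonneg _

lemma hecke_prime_step (f : ℕ → ℂ) (hf : HeckeMult f) {p : ℕ} (hp : p.Prime) {n : ℕ}
    (hn : 0 < n) :
    ‖f (n * p ^ 2)‖ ≤
      ‖f (p ^ 2)‖ * ‖f n‖ + ‖f n‖ + W f n p := by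
  have key := hf.2 n (p ^ 2) hn (pow_pos hp.pos 2)
  have hp2 : 0 < p ^ 2 := pow_pos hp.pos 2
  by_cases h2 : p ^ 2 ∣ n
  · have hg : Nat.gcd n (p ^ 2) = p ^ 2 := Nat.gcd_eq_right h2
    rw [hg, Nat.sum_divisors_prime_pow hp] at key
    rw [Finset.sum_range_succ, Finset.sum_range_succ, Finset.sum_range_one] at key
    have e0 : n * p ^ 2 / (p ^ 0) ^ 2 = n * p ^ 2 := by norm_num
    have e1 : n * p ^ 2 / (p ^ 1) ^ 2 = n := by
      rw [pow_one]; exact Nat.mul_div_cancel n hp2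
    have e2 : n * p ^ 2 / (p ^ 2) ^ 2 = n / p ^ 2 := by
      rw [show (p ^ 2) ^ 2 = p ^ 2 * p ^ 2 from sq (p ^ 2)]
      exact Nat.mul_div_mul_right n (p ^ 2) hp2
    rw [e0, e1, e2] at key
    have hW : W f n p = ‖f (n / p ^ 2)‖ := by simp [W, h2]
    rw [hW, show f (n * p ^ 2) = f n * f (p ^ 2) - f n - f (n / p ^ 2) by
      linear_combination -key]
    calc ‖f n * f (p ^ 2) - f n - f (n / p ^ 2)‖
        ≤ ‖f n * f (p ^ 2) - f n‖ + ‖f (n / p ^ 2)‖ :=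
          norm_sub_le _ _
      _ ≤ ‖f n * f (p ^ 2)‖ + ‖f n‖
            + ‖f (n / p ^ 2)‖ := by
          gcongr; exact norm_sub_le _ _
      _ = ‖f (p ^ 2)‖ * ‖f n‖ + ‖f n‖
            + ‖f (n / p ^ 2)‖ := by rw [norm_mul, mul_comm]
  · have hWz : W f n p = 0 := by simp [W, h2]
    rw [hWz]
    by_cases h1 : p ∣ n
    · obtain ⟨t, rfl⟩ := h1
      have ht : 0 < t := Nat.pos_of_ne_zero fun h => by simp [h] at hn
      have hpt : ¬ p ∣ t := fun hd => h2 (by rw [sq]; exact mul_dvd_mul_left p hd)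
      have hg : Nat.gcd (p * t) (p ^ 2) = p := by
        rw [sq, Nat.gcd_mul_left]
        have : Nat.gcd t p = 1 := Nat.Coprime.gcd_eq_one
          ((Nat.Prime.coprime_iff_not_dvd hp).mpr hpt).symm
        rw [this, mul_one]
      rw [hg, hp.divisors, Finset.sum_pair hp.one_lt.ne] at key
      have e1 : p * t * p ^ 2 / 1 ^ 2 = p * t * p ^ 2 := by norm_num
      have e2 : p * t * p ^ 2 / p ^ 2 = p * t := Nat.mul_div_cancel _ hp2
      rw [e1, e2] at key
      rw [show f (p * t * p ^ 2) = f (p * t) * f (p ^ 2) - f (p * t) by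
        linear_combination -key]
      calc ‖f (p * t) * f (p ^ 2) - f (p * t)‖
          ≤ ‖f (p * t) * f (p ^ 2)‖ + ‖f (p * t)‖ :=
            norm_sub_le _ _
        _ = ‖f (p ^ 2)‖ * ‖f (p * t)‖ + ‖f (p * t)‖
              + 0 := by rw [norm_mul, mul_comm]; ring
        _ ≤ _ := le_refl _
    · have hg : Nat.gcd n (p ^ 2) = 1 := by
        exact Nat.Coprime.pow_right 2 (((Nat.Prime.coprime_iff_not_dvd hp).mpr h1).symm)
      rw [hg, Nat.divisors_one, Finset.sum_singleton] at key
      rw [one_pow, Nat.div_one] at key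
      rw [← key, norm_mul, mul_comm]
      have := norm_nonneg (f n)
      linarith
/-- splitting the divisors of `p * e` -/
lemma sum_divisors_prime_mul {p e : ℕ} (hp : p.Prime) (he : e ≠ 0) (hpe : ¬ p ∣ e)
    (F : ℕ → ℝ) :
    ∑ a ∈ (p * e).divisors, F a = ∑ a ∈ e.divisors, (F a + F (p * a)) := by
  have hinj : Set.InjOn (p * ·) e.divisors := fun x _ y _ h =>
    Nat.eq_of_mul_eq_mul_left hp.pos h
  have hset : (p * e).divisors = e.divisors ∪ e.divisors.image (p * ·) := by
    ext x
    simp only [Nat.mem_divisors, Finset.mem_union, Finset.mem_image]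
    constructor
    · rintro ⟨hx, -⟩
      by_cases hpx : p ∣ x
      · obtain ⟨y, rfl⟩ := hpx
        right
        exact ⟨y, ⟨⟨(mul_dvd_mul_iff_left (a := p) (by exact_mod_cast hp.pos.ne')).mp hx, he⟩,
          rfl⟩⟩
      · left
        exact ⟨(Nat.Coprime.dvd_of_dvd_mul_left
          (((Nat.Prime.coprime_iff_not_dvd hp).mpr hpx).symm) hx), he⟩
    · rintro (⟨hx, -⟩ | ⟨y, ⟨⟨hy, -⟩, rfl⟩⟩)
      · exact ⟨hx.mul_left p, mul_ne_zero hp.pos.ne' he⟩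
      · exact ⟨mul_dvd_mul_left p hy, mul_ne_zero hp.pos.ne' he⟩
  have hdisj : Disjoint e.divisors (e.divisors.image (p * ·)) := by
    rw [Finset.disjoint_left]
    rintro x hx hx'
    obtain ⟨y, hy, rfl⟩ := Finset.mem_image.mp hx'
    exact hpe (dvd_trans (Dvd.intro y rfl) (Nat.mem_divisors.mp hx).1)
  rw [hset, Finset.sum_union hdisj, Finset.sum_image (fun x hx y hy h => hinj hx hy h),
    ← Finset.sum_add_distrib]

lemma W_bound (f : ℕ → ℂ) (hf : HeckeMult f) {p : ℕ} (hp : p.Prime) {c m : ℕ}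
    (hm : 0 < m) (hpc : ¬ p ∣ c) :
    W f (m * p ^ 2) c ≤ ‖f (p ^ 2)‖ * W f m c + W f m c + W f m (p * c) := by
  have hcp : Nat.Coprime (c ^ 2) (p ^ 2) :=
    ((Nat.Prime.coprime_iff_not_dvd hp).mpr hpc).symm.pow 2 2
  by_cases hc : c ^ 2 ∣ m
  · obtain ⟨t, rfl⟩ := hc
    have ht : 0 < t := Nat.pos_of_ne_zero fun h => by simp [h] at hm
    have hc0 : 0 < c := Nat.pos_of_ne_zero fun h => by simp [h] at hm
    have hc2 : 0 < c ^ 2 := pow_pos hc0 2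
    have eW1 : W f (c ^ 2 * t) c = ‖f t‖ := by
      simp [W, Dvd.intro _ rfl, Nat.mul_div_cancel_left _ hc2]
    have eW2 : W f (c ^ 2 * t * p ^ 2) c = ‖f (t * p ^ 2)‖ := by
      have hdvd : c ^ 2 ∣ c ^ 2 * t * p ^ 2 := ⟨t * p ^ 2, by ring⟩
      have : c ^ 2 * t * p ^ 2 / c ^ 2 = t * p ^ 2 := by
        rw [show c ^ 2 * t * p ^ 2 = t * p ^ 2 * c ^ 2 by ring]
        exact Nat.mul_div_cancel _ hc2
      simp [W, hdvd, this]
    have eW3 : W f (c ^ 2 * t) (p * c) = W f t p := by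
      have hiff : (p * c) ^ 2 ∣ c ^ 2 * t ↔ p ^ 2 ∣ t := by
        rw [mul_pow, show p ^ 2 * c ^ 2 = c ^ 2 * p ^ 2 by ring]
        exact mul_dvd_mul_iff_left (a := (c ^ 2 : ℕ)) hc2.ne'
      by_cases hpt : p ^ 2 ∣ t
      · have h1 : (p * c) ^ 2 ∣ c ^ 2 * t := hiff.mpr hpt
        have h2 : c ^ 2 * t / (p * c) ^ 2 = t / p ^ 2 := by
          obtain ⟨s, rfl⟩ := hpt
          rw [show c ^ 2 * (p ^ 2 * s) = s * (p * c) ^ 2 by ring,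
            Nat.mul_div_cancel _ (pow_pos (Nat.mul_pos hp.pos hc0) 2),
            show p ^ 2 * s = s * p ^ 2 by ring,
            Nat.mul_div_cancel _ (pow_pos hp.pos 2)]
        simp [W, h1, hpt, h2]
      · simp [W, hiff.not.mpr hpt, hpt]
    rw [eW1, eW2, eW3]
    exact hecke_prime_step f hf hp ht
  · have hc' : ¬ c ^ 2 ∣ m * p ^ 2 := fun h => hc (hcp.dvd_of_dvd_mul_right h)
    have : W f (m * p ^ 2) c = 0 := by simp [W, hc']
    rw [this]
    have h1 := W_nonneg f m c
    have h2 := W_nonneg f m (p * c)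
    have h3 := norm_nonneg (f (p ^ 2))
    nlinarith

lemma hecke_aux (f : ℕ → ℂ) (hf : HeckeMult f) : ∀ d : ℕ, Squarefree d → ∀ m : ℕ, 0 < m →
    ‖f (m * d ^ 2)‖ ≤
      ∑ a ∈ d.divisors, ∑ c ∈ (d / a).divisors,
        ‖f (a ^ 2)‖ * W f m c := by
  intro d
  induction d using Nat.strong_induction_on with
  | _ d ih =>
  intro hd m hm
  rcases eq_or_ne d 1 with rfl | hd1
  · simp [Nat.divisors_one, W, hf.1]
  have hd0 : d ≠ 0 := hd.ne_zero
  have hp : d.minFac.Prime := Nat.minFac_prime hd1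
  obtain ⟨e, hde⟩ := d.minFac_dvd
  set p := d.minFac with hpdef
  have he0 : e ≠ 0 := by rintro rfl; exact hd0 (by simp [hde])
  have hpe : ¬ p ∣ e := fun h => Nat.squarefree_iff_prime_squarefree.mp hd p hp
    (by rw [hde]; exact mul_dvd_mul_left p h)
  have hpe' : Nat.Coprime p e := (Nat.Prime.coprime_iff_not_dvd hp).mpr hpe
  have he : Squarefree e := hd.squarefree_of_dvd ⟨p, by rw [hde]; ring⟩
  have helt : e < d := by
    rw [hde]
    exact lt_mul_of_one_lt_left (Nat.pos_of_ne_zero he0) hp.one_lt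
  have hmp : 0 < m * p ^ 2 := Nat.mul_pos hm (pow_pos hp.pos 2)
  have step1 : ‖f (m * d ^ 2)‖ ≤
      ∑ a ∈ e.divisors, ∑ c ∈ (e / a).divisors,
        ‖f (a ^ 2)‖ * W f (m * p ^ 2) c := by
    have : m * d ^ 2 = m * p ^ 2 * e ^ 2 := by rw [hde]; ring
    rw [this]
    exact ih e helt he (m * p ^ 2) hmp
  refine le_trans step1 ?_
  have step2 : ∀ a ∈ e.divisors, ∀ c ∈ (e / a).divisors,
      ‖f (a ^ 2)‖ * W f (m * p ^ 2) c ≤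
        ‖f (a ^ 2)‖ * (‖f (p ^ 2)‖ * W f m c + W f m c
          + W f m (p * c)) := by
    intro a ha c hc
    have hce : c ∣ e := (Nat.mem_divisors.mp hc).1.trans (Nat.div_dvd_of_dvd
      (Nat.mem_divisors.mp ha).1)
    have hpc : ¬ p ∣ c := fun h => hpe (h.trans hce)
    exact mul_le_mul_of_nonneg_left (W_bound f hf hp hm hpc) (norm_nonneg _)
  have step3 : ∑ a ∈ e.divisors, ∑ c ∈ (e / a).divisors,
      ‖f (a ^ 2)‖ * W f (m * p ^ 2) c ≤
      ∑ a ∈ e.divisors, ∑ c ∈ (e / a).divisors,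
        ‖f (a ^ 2)‖ * (‖f (p ^ 2)‖ * W f m c + W f m c
          + W f m (p * c)) := by
    refine Finset.sum_le_sum fun a ha => Finset.sum_le_sum fun c hc => step2 a ha c hc
  refine le_trans step3 (le_of_eq ?_)
  -- Now show the RHS sum equals the target sum over divisors of d = p * e.
  rw [hde]
  rw [sum_divisors_prime_mul hp he0 hpe
    (fun a => ∑ c ∈ (p * e / a).divisors, ‖f (a ^ 2)‖ * W f m c)]
  refine Finset.sum_congr rfl fun a ha => ?_
  have hae : a ∣ e := (Nat.mem_divisors.mp ha).1
  have ha0 : a ≠ 0 := by rintro rfl; exact he0 (Nat.zero_dvd.mp hae)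
  have hpa : ¬ p ∣ a := fun h => hpe (h.trans hae)
  have hea0 : e / a ≠ 0 :=
    (Nat.div_pos (Nat.le_of_dvd (Nat.pos_of_ne_zero he0) hae) (Nat.pos_of_ne_zero ha0)).ne'
  have hpea : ¬ p ∣ e / a := fun h => hpe (h.trans (Nat.div_dvd_of_dvd hae))
  have h1 : p * e / a = p * (e / a) := Nat.mul_div_assoc p hae
  have h2 : p * e / (p * a) = e / a := Nat.mul_div_mul_left e a hp.pos
  rw [h1, h2]
  rw [sum_divisors_prime_mul hp hea0 hpea
    (fun c => ‖f (a ^ 2)‖ * W f m c), ← Finset.sum_add_distrib]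
  refine Finset.sum_congr rfl fun c hc => ?_
  have hfpa : f (p ^ 2) * f (a ^ 2) = f ((p * a) ^ 2) := by
    rw [mul_pow]
    exact hecke_coprime f hf (pow_pos hp.pos 2) (pow_pos (Nat.pos_of_ne_zero ha0) 2)
      (((Nat.Prime.coprime_iff_not_dvd hp).mpr hpa).pow 2 2)
  rw [← hfpa, norm_mul]
  ring

theorem hecke_fmd2 (f : ℕ → ℂ) (hf : HeckeMult f) (d : ℕ) (hd : Squarefree d)
    (m : ℕ) (hm : 0 < m) :
    ‖f (m * d ^ 2)‖ ≤
      ∑ a ∈ d.divisors, ∑ c ∈ (d / a).divisors,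
        ‖f (a ^ 2)‖ *
          ‖(if c ^ 2 ∣ m then f (m / c ^ 2) else 0)‖ := by
  exact hecke_aux f hf d hd m hm
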